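/- Let μ and ν be q-tame Borel measures on ℝ² vanishing on {(x,y) : y ≤ x}, each concentrated on a countable set (there exist countable sets S, S' ⊆ ℝ² with μ(ℝ² ∖ S) = 0 and ν(ℝ² ∖ S') = 0), and each with finite second persistence moment: ∫ (x₂ − x₁)² dμ(x₁,x₂) < ∞ and ∫ (y₂ − y₁)² dν(y₁,y₂) < ∞. Let γ be any Borel measure on ℝ² × ℝ² concentrated on {((x₁,x₂),(y₁,y₂)) : x₁ ≤ x₂ and y₁ ≤ y₂} such that the pushforward of γ under the first projection agrees with μ on all Borel subsets of {(x,y) : x < y}, and the pushforward under the second projection agrees with ν on all Borel subsets of {(x,y) : x < y} (γ is a coupling of μ and ν). Then ∫_ℝ ∫_0^∞ |λ_μ(a,t) − λ_ν(a,t)| da dt ≤ (1/2) ∫ d_rk(x,y) dγ(x,y). In particular ‖λ_μ − λ_ν‖_{L¹} ≤ (1/2) W₁^{rk}(μ,ν), where W₁^{rk} is the infimum of ∫ d_rk dγ over all such couplings γ. -/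

import Mathlib

open MeasureTheory Set Filter
open scoped ENNReal

/-- The open quadrant `Q_{t,h} = (-∞, t-h) × (t+h, ∞)`. -/
def quadrant (t h : ℝ) : Set (ℝ × ℝ) := Set.Iio (t - h) ×ˢ Set.Ioi (t + h)

/-- A Borel measure on `ℝ²` is q-tame if every open quadrant has finite measure. -/
def QTame (μ : Measure (ℝ × ℝ)) : Prop := ∀ t h : ℝ, 0 ≤ h → μ (quadrant t h) < ⊤

/-- The continuous persistence landscape `λ_μ(a,t) = sup {h > 0 : μ(Q_{t,h}) ≥ a}`,
with the convention `sup ∅ = 0` (which is the convention of `Real.sSup`). -/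
noncomputable def landscape (μ : Measure (ℝ × ℝ)) (a t : ℝ) : ℝ :=
  sSup {h : ℝ | 0 < h ∧ a ≤ (μ (quadrant t h)).toReal}
/-- The rank metric `d_rk` on points of the half-plane. -/
noncomputable def drk (x y : ℝ × ℝ) : ℝ :=
  (1 / 2) * (x.2 - x.1) ^ 2 + (1 / 2) * (y.2 - y.1) ^ 2
    - (max (min x.2 y.2 - max x.1 y.1) 0) ^ 2

/-! ### Auxiliary lemmas -/

lemma quadrant_measurableSet (t h : ℝ) : MeasurableSet (quadrant t h) :=
  measurableSet_Iio.prod measurableSet_Ioi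

lemma mem_quadrant {x : ℝ × ℝ} {t h : ℝ} : x ∈ quadrant t h ↔ x.1 < t - h ∧ t + h < x.2 :=
  Iff.rfl

lemma quadrant_anti {t h h' : ℝ} (hh : h ≤ h') : quadrant t h' ⊆ quadrant t h := by
  rintro ⟨x1, x2⟩ ⟨hx1, hx2⟩
  simp only [mem_Iio] at hx1
  simp only [mem_Ioi] at hx2
  exact ⟨by simp only [mem_Iio]; linarith, by simp only [mem_Ioi]; linarith⟩

lemma quadrant_subset_lt {t h : ℝ} (hh : 0 ≤ h) :
    quadrant t h ⊆ {p : ℝ × ℝ | p.1 < p.2} := by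
  rintro ⟨x1, x2⟩ ⟨hx1, hx2⟩
  simp only [mem_setOf_eq]
  simp only [mem_Iio] at hx1
  simp only [mem_Ioi] at hx2
  linarith

/-- The triangle `{(t,h) : h > 0, (t-h,t+h) ∈ Q_{a,b}}`. -/
def tri (a b : ℝ) : Set (ℝ × ℝ) := {p | 0 < p.2 ∧ a < p.1 - p.2 ∧ p.1 + p.2 < b}

lemma tri_measurableSet (a b : ℝ) : MeasurableSet (tri a b) := by
  have : tri a b = {p : ℝ × ℝ | 0 < p.2} ∩
      ({p : ℝ × ℝ | a < p.1 - p.2} ∩ {p : ℝ × ℝ | p.1 + p.2 < b}) := rfl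
  rw [this]
  exact (measurableSet_lt measurable_const measurable_snd).inter
    ((measurableSet_lt measurable_const (measurable_fst.sub measurable_snd)).inter
      (measurableSet_lt (measurable_fst.add measurable_snd) measurable_const))

lemma tri_inter (a b c d : ℝ) : tri a b ∩ tri c d = tri (max a c) (min b d) := by
  ext ⟨t, h⟩
  simp only [tri, mem_inter_iff, mem_setOf_eq, max_lt_iff, lt_min_iff]
  tauto

open intervalIntegral in
lemma lint_wedge (w : ℝ) :
    ∫⁻ h in Ioi (0 : ℝ), ENNReal.ofReal (w - 2 * h) = ENNReal.ofReal ((max w 0) ^ 2 / 4) := by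
  rcases le_or_gt w 0 with hw | hw
  · rw [max_eq_right hw]
    rw [setLIntegral_congr_fun measurableSet_Ioi
      (fun h (hh : h ∈ Ioi (0:ℝ)) => ?_), lintegral_zero]
    · simp
    · exact ENNReal.ofReal_eq_zero.2 (by simp only [mem_Ioi] at hh; linarith)
  · have h2 : (0:ℝ) ≤ w / 2 := by linarith
    rw [max_eq_left hw.le, ← Ioc_union_Ioi_eq_Ioi h2,
      lintegral_union measurableSet_Ioi (Ioc_disjoint_Ioi le_rfl)]
    have hzero : ∫⁻ h in Ioi (w / 2), ENNReal.ofReal (w - 2 * h) = 0 := by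
      rw [setLIntegral_congr_fun measurableSet_Ioi
        (fun h (hh : h ∈ Ioi (w/2)) => ?_), lintegral_zero]
      exact ENNReal.ofReal_eq_zero.2 (by simp only [mem_Ioi] at hh; linarith)
    rw [hzero, add_zero]
    have hint : IntegrableOn (fun h : ℝ => w - 2 * h) (Ioc 0 (w / 2)) volume :=
      (continuous_const.sub (continuous_const.mul continuous_id)).integrableOn_Ioc
    have hnn : 0 ≤ᵐ[volume.restrict (Ioc 0 (w/2))] fun h : ℝ => w - 2 * h := by
      rw [EventuallyLE, ae_restrict_iff' measurableSet_Ioc]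
      exact ae_of_all _ (fun h hh => by simp only [mem_Ioc] at hh; simp; linarith [hh.2])
    rw [← ofReal_integral_eq_lintegral_ofReal hint hnn]
    congr 1
    rw [← intervalIntegral.integral_of_le h2,
      intervalIntegral.integral_sub intervalIntegrable_const
        (IntervalIntegrable.const_mul intervalIntegrable_id 2),
      intervalIntegral.integral_const, intervalIntegral.integral_const_mul, integral_id]
    simp only [smul_eq_mul, sub_zero]
    ring


lemma tri_vol (a b : ℝ) :
    volume (tri a b) = ENNReal.ofReal ((max (b - a) 0) ^ 2 / 4) := by
  rw [show (volume : Measure (ℝ × ℝ)) = (volume : Measure ℝ).prod volume from rfl,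
    Measure.prod_apply_symm (tri_measurableSet a b)]
  have hslice : ∀ h : ℝ, ((fun t => (t, h)) ⁻¹' tri a b) =
      if 0 < h then Ioo (a + h) (b - h) else (∅ : Set ℝ) := by
    intro h
    split_ifs with hh
    · ext t
      simp only [mem_preimage, tri, mem_setOf_eq, mem_Ioo, hh, true_and]
      constructor
      · rintro ⟨h1, h2⟩; exact ⟨by linarith, by linarith⟩
      · rintro ⟨h1, h2⟩; exact ⟨by linarith, by linarith⟩
    · ext t
      simp only [mem_preimage, tri, mem_setOf_eq, mem_empty_iff_false, iff_false, not_and]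
      intro h'; exact absurd h' hh
  have : ∀ h : ℝ, volume ((fun t => (t, h)) ⁻¹' tri a b) =
      (Ioi (0:ℝ)).indicator (fun h => ENNReal.ofReal ((b - a) - 2 * h)) h := by
    intro h
    rw [hslice]
    rcases lt_or_ge 0 h with hh | hh
    · rw [if_pos hh, Real.volume_Ioo, indicator_of_mem (show h ∈ Ioi 0 from hh)]
      congr 1; ring
    · rw [if_neg (not_lt.2 hh), indicator_of_notMem (by simpa using hh)]
      simp
  rw [lintegral_congr this, lintegral_indicator measurableSet_Ioi, lint_wedge]

lemma tri_vol_ne_top (a b : ℝ) : volume (tri a b) ≠ ⊤ := by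
  rw [tri_vol]; exact ENNReal.ofReal_ne_top

lemma symm_diff_tri_vol {x y : ℝ × ℝ} (hx : x.1 ≤ x.2) (hy : y.1 ≤ y.2) :
    volume ((tri x.1 x.2 \ tri y.1 y.2) ∪ (tri y.1 y.2 \ tri x.1 x.2)) ≤
      2⁻¹ * ENNReal.ofReal (drk x y) := by
  set c : ℝ := max (min x.2 y.2 - max x.1 y.1) 0 with hc
  have hc0 : 0 ≤ c := le_max_right _ _
  have hcx : c ≤ x.2 - x.1 := by
    apply max_le _ (by linarith)
    have := min_le_left x.2 y.2
    have := le_max_left x.1 y.1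
    linarith
  have hcy : c ≤ y.2 - y.1 := by
    apply max_le _ (by linarith)
    have := min_le_right x.2 y.2
    have := le_max_right x.1 y.1
    linarith
  have hvol_inter : volume (tri x.1 x.2 ∩ tri y.1 y.2) = ENNReal.ofReal (c ^ 2 / 4) := by
    rw [tri_inter, tri_vol]
  have hdiff : ∀ {a b a' b' : ℝ}, 0 ≤ b - a →
      volume (tri a b \ tri a' b') = volume (tri a b) - volume (tri a b ∩ tri a' b') := by
    intro a b a' b' _
    rw [← Set.diff_self_inter]
    exact measure_diff inter_subset_left
      ((tri_measurableSet a b).inter (tri_measurableSet a' b')).nullMeasurableSet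
      (ne_top_of_le_ne_top (tri_vol_ne_top a b) (measure_mono inter_subset_left))
  have h1 : volume (tri x.1 x.2 \ tri y.1 y.2) =
      ENNReal.ofReal ((x.2 - x.1) ^ 2 / 4 - c ^ 2 / 4) := by
    rw [hdiff (by linarith), hvol_inter, tri_vol, max_eq_left (by linarith),
      ← ENNReal.ofReal_sub _ (by positivity)]
  have h2 : volume (tri y.1 y.2 \ tri x.1 x.2) =
      ENNReal.ofReal ((y.2 - y.1) ^ 2 / 4 - c ^ 2 / 4) := by
    rw [hdiff (by linarith), inter_comm, hvol_inter, tri_vol, max_eq_left (by linarith),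
      ← ENNReal.ofReal_sub _ (by positivity)]
  calc volume ((tri x.1 x.2 \ tri y.1 y.2) ∪ (tri y.1 y.2 \ tri x.1 x.2))
      ≤ volume (tri x.1 x.2 \ tri y.1 y.2) + volume (tri y.1 y.2 \ tri x.1 x.2) :=
        measure_union_le _ _
    _ = ENNReal.ofReal ((x.2 - x.1) ^ 2 / 4 - c ^ 2 / 4) +
        ENNReal.ofReal ((y.2 - y.1) ^ 2 / 4 - c ^ 2 / 4) := by rw [h1, h2]
    _ = ENNReal.ofReal (2⁻¹ * drk x y) := by
        rw [← ENNReal.ofReal_add (by nlinarith) (by nlinarith)]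
        congr 1
        rw [drk, hc]
        ring
    _ = 2⁻¹ * ENNReal.ofReal (drk x y) := by
        rw [ENNReal.ofReal_mul (by norm_num)]
        congr 1
        rw [show ((2:ℝ)⁻¹) = (1/2 : ℝ) by norm_num]
        rw [ENNReal.ofReal_div_of_pos (by norm_num)]
        simp [ENNReal.ofReal_one, ENNReal.ofReal_ofNat]

lemma landscape_nonneg (μ : Measure (ℝ × ℝ)) (a t : ℝ) : 0 ≤ landscape μ a t :=
  Real.sSup_nonneg (fun _ hx => le_of_lt hx.1)

lemma lt_landscape {μ : Measure (ℝ × ℝ)} (hμ : QTame μ) {a t h : ℝ} (hh : 0 < h)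
    (hlt : h < landscape μ a t) : a ≤ (μ (quadrant t h)).toReal := by
  set S := {h : ℝ | 0 < h ∧ a ≤ (μ (quadrant t h)).toReal} with hS
  by_cases hne : S.Nonempty
  · by_cases hbd : BddAbove S
    · obtain ⟨h', hh'S, hhh'⟩ := exists_lt_of_lt_csSup hne hlt
      exact le_trans hh'S.2 (ENNReal.toReal_mono (hμ t h hh.le).ne
        (measure_mono (quadrant_anti hhh'.le)))
    · rw [landscape, ← hS, Real.sSup_of_not_bddAbove hbd] at hlt
      linarith
  · rw [landscape, ← hS, Set.not_nonempty_iff_eq_empty.1 hne, Real.sSup_empty] at hlt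
    linarith

lemma bddAbove_landscape_set {μ : Measure (ℝ × ℝ)} (hμ : QTame μ) {a t : ℝ} (ha : 0 < a) :
    BddAbove {h : ℝ | 0 < h ∧ a ≤ (μ (quadrant t h)).toReal} := by
  by_contra hbd
  rw [not_bddAbove_iff] at hbd
  have key : ∀ n : ℕ, ENNReal.ofReal a ≤ μ (quadrant t n) := by
    intro n
    obtain ⟨h', ⟨hh'0, hh'a⟩, hnh'⟩ := hbd n
    exact ENNReal.ofReal_le_of_le_toReal (le_trans hh'a
      (ENNReal.toReal_mono (hμ t n (Nat.cast_nonneg n)).ne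
        (measure_mono (quadrant_anti hnh'.le))))
  have hiInter : (⋂ n : ℕ, quadrant t n) = ∅ := by
    rw [Set.eq_empty_iff_forall_notMem]
    rintro ⟨x1, x2⟩ hx
    obtain ⟨n, hn⟩ := exists_nat_gt (t - x1)
    have := Set.mem_iInter.1 hx n
    obtain ⟨h1, -⟩ := this
    simp only [mem_Iio] at h1
    linarith
  have htend : Tendsto (fun n : ℕ => μ (quadrant t n)) atTop (nhds 0) := by
    have := tendsto_measure_iInter_atTop (μ := μ) (s := fun n : ℕ => quadrant t n)
      (fun n => (quadrant_measurableSet t n).nullMeasurableSet)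
      (fun m n hmn => quadrant_anti (by exact_mod_cast hmn))
      ⟨0, by simpa using (hμ t 0 le_rfl).ne⟩
    rwa [hiInter, measure_empty] at this
  have h0 : ENNReal.ofReal a ≤ 0 := ge_of_tendsto' htend key
  simp only [nonpos_iff_eq_zero, ENNReal.ofReal_eq_zero] at h0
  linarith

lemma le_landscape {μ : Measure (ℝ × ℝ)} (hμ : QTame μ) {a t h : ℝ} (ha : 0 < a) (hh : 0 < h)
    (hah : a ≤ (μ (quadrant t h)).toReal) : h ≤ landscape μ a t :=
  le_csSup (bddAbove_landscape_set hμ ha) ⟨hh, hah⟩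

/-- Truncated quadrant mass, as a real-valued function of `h`. -/
noncomputable def fq (μ : Measure (ℝ × ℝ)) (t h : ℝ) : ℝ :=
  (μ (quadrant t (max h 0))).toReal

lemma fq_nonneg (μ : Measure (ℝ × ℝ)) (t h : ℝ) : 0 ≤ fq μ t h := ENNReal.toReal_nonneg

lemma fq_of_pos (μ : Measure (ℝ × ℝ)) {t h : ℝ} (hh : 0 < h) :
    fq μ t h = (μ (quadrant t h)).toReal := by
  unfold fq; rw [max_eq_left hh.le]

lemma fq_anti {μ : Measure (ℝ × ℝ)} (hμ : QTame μ) (t : ℝ) : Antitone (fq μ t) := by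
  intro h h' hhh'
  exact ENNReal.toReal_mono (hμ t (max h 0) (le_max_right _ _)).ne
    (measure_mono (quadrant_anti (max_le_max hhh' le_rfl)))

lemma fq_measurable {μ : Measure (ℝ × ℝ)} (hμ : QTame μ) (t : ℝ) : Measurable (fq μ t) :=
  (fq_anti hμ t).measurable

/-- The hypograph-type region in the `(a,h)` plane associated to the landscape of `μ`. -/
def landSet (μ : Measure (ℝ × ℝ)) (t : ℝ) : Set (ℝ × ℝ) :=
  {p | 0 < p.1 ∧ 0 < p.2 ∧ p.1 ≤ fq μ t p.2}

lemma landSet_measurableSet {μ : Measure (ℝ × ℝ)} (hμ : QTame μ) (t : ℝ) :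
    MeasurableSet (landSet μ t) := by
  have : landSet μ t = {p : ℝ × ℝ | 0 < p.1} ∩
      ({p : ℝ × ℝ | 0 < p.2} ∩ {p : ℝ × ℝ | p.1 ≤ fq μ t p.2}) := rfl
  rw [this]
  exact (measurableSet_lt measurable_const measurable_fst).inter
    ((measurableSet_lt measurable_const measurable_snd).inter
      (measurableSet_le measurable_fst ((fq_measurable hμ t).comp measurable_snd)))

lemma interval_sandwich_vol {L M : ℝ} (hL : 0 ≤ L) (hM : 0 ≤ M) {s u : Set ℝ}
    (hs1 : Ioo 0 L ⊆ s) (hs2 : s ⊆ Ioc 0 L) (hu1 : Ioo 0 M ⊆ u) (hu2 : u ⊆ Ioc 0 M) :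
    ENNReal.ofReal |L - M| ≤ volume ((s \ u) ∪ (u \ s)) := by
  have key : ∀ {L M : ℝ}, 0 ≤ M → M ≤ L → ∀ {s u : Set ℝ}, Ioo 0 L ⊆ s → u ⊆ Ioc 0 M →
      ENNReal.ofReal (L - M) ≤ volume (s \ u) := by
    intro L M hM0 hML s u hs1 hu2
    have hsub : Ioo M L ⊆ s \ u := by
      intro h hh
      rw [mem_Ioo] at hh
      refine ⟨hs1 ⟨lt_of_le_of_lt hM0 hh.1, hh.2⟩, fun hu => ?_⟩
      exact absurd (hu2 hu).2 (not_le.2 hh.1)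
    calc ENNReal.ofReal (L - M) = volume (Ioo M L) := (Real.volume_Ioo).symm
      _ ≤ volume (s \ u) := measure_mono hsub
  rcases le_total M L with hML | hLM
  · rw [abs_of_nonneg (by linarith)]
    exact le_trans (key hM hML hs1 hu2) (measure_mono subset_union_left)
  · rw [abs_of_nonpos (by linarith), neg_sub]
    exact le_trans (key hL hLM hu1 hs2) (measure_mono subset_union_right)

lemma Ioc_symm_diff_vol (L M : ℝ) :
    volume ((Ioc 0 L \ Ioc 0 M) ∪ (Ioc 0 M \ Ioc 0 L)) ≤ ENNReal.ofReal |L - M| := by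
  have key : ∀ A B : ℝ, Ioc 0 A \ Ioc 0 B ⊆ Ioc B A := by
    intro A B h hh
    obtain ⟨⟨h1, h2⟩, h3⟩ := hh
    rw [mem_Ioc] at *
    refine ⟨?_, h2⟩
    by_contra hc
    exact h3 ⟨h1, not_lt.1 hc⟩
  calc volume ((Ioc 0 L \ Ioc 0 M) ∪ (Ioc 0 M \ Ioc 0 L))
      ≤ volume (Ioc M L) + volume (Ioc L M) := by
        refine le_trans (measure_union_le _ _) (add_le_add ?_ ?_) <;>
          exact measure_mono (key _ _)
    _ ≤ ENNReal.ofReal |L - M| := by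
        rw [Real.volume_Ioc, Real.volume_Ioc]
        rcases le_total M L with hML | hLM
        · rw [ENNReal.ofReal_of_nonpos (show M - L ≤ 0 by linarith), add_zero, abs_of_nonneg (by linarith)]
        · rw [ENNReal.ofReal_of_nonpos (show L - M ≤ 0 by linarith), zero_add, abs_of_nonpos (by linarith),
            neg_sub]

lemma abs_toReal_le {m n k₁ k₂ : ℝ≥0∞} (hm : m ≠ ⊤) (hn : n ≠ ⊤) (h1 : m ≤ n + k₁)
    (h2 : n ≤ m + k₂) : ENNReal.ofReal |m.toReal - n.toReal| ≤ k₁ + k₂ := by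
  rcases eq_or_ne k₁ ⊤ with hk | hk
  · simp [hk]
  rcases eq_or_ne k₂ ⊤ with hk' | hk'
  · simp [hk']
  have r1 : m.toReal ≤ n.toReal + k₁.toReal := by
    rw [← ENNReal.toReal_add hn hk]
    exact ENNReal.toReal_mono (by finiteness) h1
  have r2 : n.toReal ≤ m.toReal + k₂.toReal := by
    rw [← ENNReal.toReal_add hm hk']
    exact ENNReal.toReal_mono (by finiteness) h2
  have habs : |m.toReal - n.toReal| ≤ k₁.toReal + k₂.toReal := by
    rw [abs_sub_le_iff]
    constructor
    · have := ENNReal.toReal_nonneg (a := k₂); linarith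
    · have := ENNReal.toReal_nonneg (a := k₁); linarith
  calc ENNReal.ofReal |m.toReal - n.toReal| ≤ ENNReal.ofReal (k₁.toReal + k₂.toReal) :=
        ENNReal.ofReal_le_ofReal habs
    _ = k₁ + k₂ := by
        rw [ENNReal.ofReal_add ENNReal.toReal_nonneg ENNReal.toReal_nonneg,
          ENNReal.ofReal_toReal hk, ENNReal.ofReal_toReal hk']

lemma exists_rat_quadrant {x : ℝ × ℝ} (hx : x.1 < x.2) :
    ∃ r : ℚ × ℚ, 0 < r.2 ∧ x ∈ quadrant (r.1 : ℝ) (r.2 : ℝ) := by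
  obtain ⟨u, hu1, hu2⟩ := exists_rat_btwn hx
  obtain ⟨v, hv1, hv2⟩ := exists_rat_btwn hu2
  have huv : u < v := by exact_mod_cast hv1
  refine ⟨((u + v) / 2, (v - u) / 2), by simpa using huv, ?_, ?_⟩
  · show x.1 < ((((u + v) / 2 : ℚ)) : ℝ) - (((v - u) / 2 : ℚ) : ℝ)
    push_cast
    linarith
  · show ((((u + v) / 2 : ℚ)) : ℝ) + (((v - u) / 2 : ℚ) : ℝ) < x.2
    push_cast
    linarith

/-- The parameterized symmetric-difference region. -/
def WSet : Set ((ℝ × ℝ) × ((ℝ × ℝ) × (ℝ × ℝ))) :=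
  {z | (z.1 ∈ tri z.2.1.1 z.2.1.2 ∧ z.1 ∉ tri z.2.2.1 z.2.2.2) ∨
       (z.1 ∈ tri z.2.2.1 z.2.2.2 ∧ z.1 ∉ tri z.2.1.1 z.2.1.2)}

lemma WSet_measurableSet : MeasurableSet WSet := by
  have hT : ∀ f g : ((ℝ × ℝ) × ((ℝ × ℝ) × (ℝ × ℝ))) → ℝ, Measurable f → Measurable g →
      MeasurableSet {z : (ℝ × ℝ) × ((ℝ × ℝ) × (ℝ × ℝ)) | z.1 ∈ tri (f z) (g z)} := by
    intro f g hf hg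
    have : {z : (ℝ × ℝ) × ((ℝ × ℝ) × (ℝ × ℝ)) | z.1 ∈ tri (f z) (g z)} =
        {z : (ℝ × ℝ) × ((ℝ × ℝ) × (ℝ × ℝ)) | 0 < z.1.2} ∩
        ({z : (ℝ × ℝ) × ((ℝ × ℝ) × (ℝ × ℝ)) | f z < z.1.1 - z.1.2} ∩
         {z : (ℝ × ℝ) × ((ℝ × ℝ) × (ℝ × ℝ)) | z.1.1 + z.1.2 < g z}) := rfl
    rw [this]
    exact (measurableSet_lt measurable_const measurable_fst.snd).inter
      ((measurableSet_lt hf (measurable_fst.fst.sub measurable_fst.snd)).inter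
        (measurableSet_lt (measurable_fst.fst.add measurable_fst.snd) hg))
  have h1 := hT _ _ measurable_snd.fst.fst measurable_snd.fst.snd
  have h2 := hT _ _ measurable_snd.snd.fst measurable_snd.snd.snd
  have : WSet = ({z : (ℝ × ℝ) × ((ℝ × ℝ) × (ℝ × ℝ)) | z.1 ∈ tri z.2.1.1 z.2.1.2} \
      {z | z.1 ∈ tri z.2.2.1 z.2.2.2}) ∪
      ({z | z.1 ∈ tri z.2.2.1 z.2.2.2} \ {z | z.1 ∈ tri z.2.1.1 z.2.1.2}) := rfl
  rw [this]
  exact (h1.diff h2).union (h2.diff h1)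

lemma mem_tri_iff {t h : ℝ} {x : ℝ × ℝ} (hh : 0 < h) :
    (t, h) ∈ tri x.1 x.2 ↔ x ∈ quadrant t h := by
  simp only [tri, mem_setOf_eq, mem_quadrant]
  constructor
  · rintro ⟨-, h1, h2⟩; exact ⟨by linarith, by linarith⟩
  · rintro ⟨h1, h2⟩; exact ⟨hh, by linarith, by linarith⟩

/-- $L^1$-stability of continuous persistence landscapes with respect to the
1-Wasserstein distance built from the rank metric. -/
theorem landscape_L1_stability (μ ν : Measure (ℝ × ℝ)) (hμ : QTame μ) (hν : QTame ν)
    (hμ0 : μ {p : ℝ × ℝ | p.2 ≤ p.1} = 0) (hν0 : ν {p : ℝ × ℝ | p.2 ≤ p.1} = 0)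
    (hμc : ∃ S : Set (ℝ × ℝ), S.Countable ∧ μ Sᶜ = 0)
    (hνc : ∃ S' : Set (ℝ × ℝ), S'.Countable ∧ ν S'ᶜ = 0)
    (hμm : ∫⁻ p, ENNReal.ofReal ((p.2 - p.1) ^ 2) ∂μ < ⊤)
    (hνm : ∫⁻ p, ENNReal.ofReal ((p.2 - p.1) ^ 2) ∂ν < ⊤)
    (γ : Measure ((ℝ × ℝ) × (ℝ × ℝ)))
    (hγsupp : γ {q : (ℝ × ℝ) × (ℝ × ℝ) | ¬ (q.1.1 ≤ q.1.2 ∧ q.2.1 ≤ q.2.2)} = 0)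
    (hγfst : ∀ B : Set (ℝ × ℝ), MeasurableSet B → B ⊆ {p : ℝ × ℝ | p.1 < p.2} →
      γ (Prod.fst ⁻¹' B) = μ B)
    (hγsnd : ∀ B : Set (ℝ × ℝ), MeasurableSet B → B ⊆ {p : ℝ × ℝ | p.1 < p.2} →
      γ (Prod.snd ⁻¹' B) = ν B) :
    ∫⁻ t : ℝ, ∫⁻ a in Set.Ioi (0 : ℝ),
        ENNReal.ofReal |landscape μ a t - landscape ν a t| ≤
      (1 / 2 : ℝ≥0∞) * ∫⁻ q, ENNReal.ofReal (drk q.1 q.2) ∂γ := by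
  classical
  set E : Set ((ℝ × ℝ) × (ℝ × ℝ)) :=
    {q | (q.1.1 ≤ q.1.2 ∧ q.2.1 ≤ q.2.2) ∧ (q.1.1 < q.1.2 ∨ q.2.1 < q.2.2)} with hE
  have hEm : MeasurableSet E := by
    have : E = ({q : (ℝ × ℝ) × (ℝ × ℝ) | q.1.1 ≤ q.1.2} ∩ {q | q.2.1 ≤ q.2.2}) ∩
        ({q : (ℝ × ℝ) × (ℝ × ℝ) | q.1.1 < q.1.2} ∪ {q | q.2.1 < q.2.2}) := rfl
    rw [this]
    exact ((measurableSet_le measurable_fst.fst measurable_fst.snd).inter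
        (measurableSet_le measurable_snd.fst measurable_snd.snd)).inter
      ((measurableSet_lt measurable_fst.fst measurable_fst.snd).union
        (measurableSet_lt measurable_snd.fst measurable_snd.snd))
  set γ' : Measure ((ℝ × ℝ) × (ℝ × ℝ)) := γ.restrict E with hγ'
  have hfst : ∀ t h : ℝ, 0 < h → γ' (Prod.fst ⁻¹' quadrant t h) = μ (quadrant t h) := by
    intro t h hh
    have hq := quadrant_measurableSet t h
    have hsub := quadrant_subset_lt (t := t) hh.le
    have h0 : γ (Prod.fst ⁻¹' quadrant t h \ E) = 0 := by
      refine measure_mono_null (fun q hq' => ?_) hγsupp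
      intro hgood
      exact hq'.2 ⟨hgood, Or.inl (hsub hq'.1)⟩
    have hsplit := measure_inter_add_diff (μ := γ) (Prod.fst ⁻¹' quadrant t h) hEm
    rw [h0, add_zero] at hsplit
    rw [hγ', Measure.restrict_apply (hq.preimage measurable_fst), hsplit]
    exact hγfst _ hq hsub
  have hsnd : ∀ t h : ℝ, 0 < h → γ' (Prod.snd ⁻¹' quadrant t h) = ν (quadrant t h) := by
    intro t h hh
    have hq := quadrant_measurableSet t h
    have hsub := quadrant_subset_lt (t := t) hh.le
    have h0 : γ (Prod.snd ⁻¹' quadrant t h \ E) = 0 := by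
      refine measure_mono_null (fun q hq' => ?_) hγsupp
      intro hgood
      exact hq'.2 ⟨hgood, Or.inr (hsub hq'.1)⟩
    have hsplit := measure_inter_add_diff (μ := γ) (Prod.snd ⁻¹' quadrant t h) hEm
    rw [h0, add_zero] at hsplit
    rw [hγ', Measure.restrict_apply (hq.preimage measurable_snd), hsplit]
    exact hγsnd _ hq hsub
  have hγ'Ec : γ' Eᶜ = 0 := by
    rw [hγ', Measure.restrict_apply hEm.compl, compl_inter_self, measure_empty]
  haveI : SigmaFinite γ' := by
    set U : Option (ℚ × ℚ) → Set ((ℝ × ℝ) × (ℝ × ℝ)) := fun o =>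
      Option.elim o Eᶜ (fun r => if 0 < r.2 then
        Prod.fst ⁻¹' quadrant (r.1 : ℝ) (r.2 : ℝ) ∪ Prod.snd ⁻¹' quadrant (r.1 : ℝ) (r.2 : ℝ)
        else ∅) with hU
    apply Measure.sigmaFinite_of_countable (countable_range U)
    · rintro s ⟨o, rfl⟩
      match o with
      | none =>
        show γ' Eᶜ < ⊤
        rw [hγ'Ec]
        exact ENNReal.zero_lt_top
      | some r =>
        show γ' (if 0 < r.2 then _ else _) < ⊤
        split_ifs with hr
        · have hr' : (0 : ℝ) < (r.2 : ℝ) := by exact_mod_cast hr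
          calc γ' (Prod.fst ⁻¹' quadrant (r.1 : ℝ) (r.2 : ℝ) ∪
                Prod.snd ⁻¹' quadrant (r.1 : ℝ) (r.2 : ℝ))
              ≤ γ' (Prod.fst ⁻¹' quadrant (r.1 : ℝ) (r.2 : ℝ)) +
                γ' (Prod.snd ⁻¹' quadrant (r.1 : ℝ) (r.2 : ℝ)) := measure_union_le _ _
            _ = μ (quadrant (r.1 : ℝ) (r.2 : ℝ)) + ν (quadrant (r.1 : ℝ) (r.2 : ℝ)) := by
                rw [hfst _ _ hr', hsnd _ _ hr']
            _ < ⊤ := ENNReal.add_lt_top.2 ⟨hμ _ _ hr'.le, hν _ _ hr'.le⟩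
        · simp
    · rw [sUnion_range]
      ext q
      simp only [mem_iUnion, mem_univ, iff_true]
      by_cases hq : q ∈ E
      · rcases hq.2 with h | h
        · obtain ⟨r, hr2, hrq⟩ := exists_rat_quadrant h
          refine ⟨some r, ?_⟩
          show q ∈ (if 0 < r.2 then _ else _)
          rw [if_pos hr2]
          exact Or.inl hrq
        · obtain ⟨r, hr2, hrq⟩ := exists_rat_quadrant h
          refine ⟨some r, ?_⟩
          show q ∈ (if 0 < r.2 then _ else _)
          rw [if_pos hr2]
          exact Or.inr hrq
      · exact ⟨none, hq⟩
  set I : (ℝ × ℝ) → ((ℝ × ℝ) × (ℝ × ℝ)) → ℝ≥0∞ :=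
    fun p q => WSet.indicator 1 (p, q) with hI
  have hIm : Measurable (Function.uncurry I) := by
    have : Function.uncurry I = WSet.indicator 1 := by
      funext z
      cases z
      rfl
    rw [this]
    exact measurable_one.indicator WSet_measurableSet
  have key_t : ∀ t : ℝ, (∫⁻ a in Ioi (0 : ℝ),
      ENNReal.ofReal |landscape μ a t - landscape ν a t|) ≤
      ∫⁻ h : ℝ, ∫⁻ q, I (t, h) q ∂γ' := by
    intro t
    set X : Set (ℝ × ℝ) := (landSet μ t \ landSet ν t) ∪ (landSet ν t \ landSet μ t) with hX
    have hXm : MeasurableSet X :=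
      ((landSet_measurableSet hμ t).diff (landSet_measurableSet hν t)).union
        ((landSet_measurableSet hν t).diff (landSet_measurableSet hμ t))
    calc ∫⁻ a in Ioi (0 : ℝ), ENNReal.ofReal |landscape μ a t - landscape ν a t|
        ≤ ∫⁻ a in Ioi (0 : ℝ), volume (Prod.mk a ⁻¹' X) := by
          apply lintegral_mono_ae
          rw [ae_restrict_iff' measurableSet_Ioi]
          refine ae_of_all _ fun a ha => ?_
          rw [mem_Ioi] at ha
          have hpre : Prod.mk a ⁻¹' X =
              ((Prod.mk a ⁻¹' landSet μ t) \ (Prod.mk a ⁻¹' landSet ν t)) ∪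
              ((Prod.mk a ⁻¹' landSet ν t) \ (Prod.mk a ⁻¹' landSet μ t)) := rfl
          rw [hpre]
          refine interval_sandwich_vol (landscape_nonneg μ a t) (landscape_nonneg ν a t)
            ?_ ?_ ?_ ?_
          · intro h hh
            exact ⟨ha, hh.1, by rw [fq_of_pos μ hh.1]; exact lt_landscape hμ hh.1 hh.2⟩
          · intro h hh
            exact ⟨hh.2.1, le_landscape hμ ha hh.2.1 (by rw [← fq_of_pos μ hh.2.1]; exact hh.2.2)⟩
          · intro h hh
            exact ⟨ha, hh.1, by rw [fq_of_pos ν hh.1]; exact lt_landscape hν hh.1 hh.2⟩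
          · intro h hh
            exact ⟨hh.2.1, le_landscape hν ha hh.2.1 (by rw [← fq_of_pos ν hh.2.1]; exact hh.2.2)⟩
      _ ≤ ∫⁻ a : ℝ, volume (Prod.mk a ⁻¹' X) := setLIntegral_le_lintegral _ _
      _ = ((volume : Measure ℝ).prod volume) X := (Measure.prod_apply hXm).symm
      _ = ∫⁻ h : ℝ, volume ((fun a => (a, h)) ⁻¹' X) := Measure.prod_apply_symm hXm
      _ ≤ ∫⁻ h : ℝ, (Ioi (0 : ℝ)).indicator (fun h => ∫⁻ q, I (t, h) q ∂γ') h := by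
          apply lintegral_mono
          intro h
          beta_reduce
          rcases lt_or_ge 0 h with hh | hh
          · rw [indicator_of_mem (show h ∈ Ioi 0 from hh)]
            have hsl : ((fun a => (a, h)) ⁻¹' X) =
                (Ioc 0 (fq μ t h) \ Ioc 0 (fq ν t h)) ∪
                (Ioc 0 (fq ν t h) \ Ioc 0 (fq μ t h)) := by
              have hμs : ((fun a : ℝ => (a, h)) ⁻¹' landSet μ t) = Ioc 0 (fq μ t h) := by
                ext a
                simp only [mem_preimage, landSet, mem_setOf_eq, mem_Ioc, hh, true_and]
              have hνs : ((fun a : ℝ => (a, h)) ⁻¹' landSet ν t) = Ioc 0 (fq ν t h) := by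
                ext a
                simp only [mem_preimage, landSet, mem_setOf_eq, mem_Ioc, hh, true_and]
              show ((fun a : ℝ => (a, h)) ⁻¹' landSet μ t) \ ((fun a : ℝ => (a, h)) ⁻¹' landSet ν t) ∪
                  (((fun a : ℝ => (a, h)) ⁻¹' landSet ν t) \ ((fun a : ℝ => (a, h)) ⁻¹' landSet μ t)) = _
              rw [hμs, hνs]
            rw [hsl]
            refine le_trans (Ioc_symm_diff_vol _ _) ?_
            set A : Set ((ℝ × ℝ) × (ℝ × ℝ)) := Prod.fst ⁻¹' quadrant t h with hA
            set B : Set ((ℝ × ℝ) × (ℝ × ℝ)) := Prod.snd ⁻¹' quadrant t h with hB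
            have hAm : MeasurableSet A := (quadrant_measurableSet t h).preimage measurable_fst
            have hBm : MeasurableSet B := (quadrant_measurableSet t h).preimage measurable_snd
            have hAfin : γ' A ≠ ⊤ := by rw [hfst t h hh]; exact (hμ t h hh.le).ne
            have hBfin : γ' B ≠ ⊤ := by rw [hsnd t h hh]; exact (hν t h hh.le).ne
            have hFA : fq μ t h = (γ' A).toReal := by rw [fq_of_pos μ hh, hfst t h hh]
            have hGB : fq ν t h = (γ' B).toReal := by rw [fq_of_pos ν hh, hsnd t h hh]
            have h1 : γ' A ≤ γ' B + γ' (A \ B) :=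
              le_trans (measure_mono (subset_diff_union A B))
                ((measure_union_le _ _).trans_eq (add_comm _ _))
            have h2 : γ' B ≤ γ' A + γ' (B \ A) :=
              le_trans (measure_mono (subset_diff_union B A))
                ((measure_union_le _ _).trans_eq (add_comm _ _))
            have habs := abs_toReal_le hAfin hBfin h1 h2
            rw [hFA, hGB]
            refine le_trans habs ?_
            rw [← measure_union disjoint_sdiff_sdiff (hBm.diff hAm)]
            have hcongr : ∀ q : (ℝ × ℝ) × (ℝ × ℝ),
                I (t, h) q = (Prod.mk ((t, h) : ℝ × ℝ) ⁻¹' WSet).indicator 1 q := by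
              intro q
              simp [hI, Set.indicator_apply, Set.mem_preimage]
            rw [lintegral_congr hcongr,
              lintegral_indicator_one (WSet_measurableSet.preimage measurable_prodMk_left)]
            apply le_of_eq
            congr 1
            ext q
            constructor
            · rintro (⟨hq1, hq2⟩ | ⟨hq1, hq2⟩)
              · exact Or.inl ⟨(mem_tri_iff hh).2 hq1, fun hc => hq2 ((mem_tri_iff hh).1 hc)⟩
              · exact Or.inr ⟨(mem_tri_iff hh).2 hq1, fun hc => hq2 ((mem_tri_iff hh).1 hc)⟩
            · rintro (⟨hq1, hq2⟩ | ⟨hq1, hq2⟩)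
              · exact Or.inl ⟨(mem_tri_iff hh).1 hq1, fun hc => hq2 ((mem_tri_iff hh).2 hc)⟩
              · exact Or.inr ⟨(mem_tri_iff hh).1 hq1, fun hc => hq2 ((mem_tri_iff hh).2 hc)⟩
          · rw [indicator_of_notMem (by simpa using hh)]
            have hempty : ((fun a => (a, h)) ⁻¹' X) = ∅ := by
              rw [eq_empty_iff_forall_notMem]
              rintro a (⟨⟨-, hh', -⟩, -⟩ | ⟨⟨-, hh', -⟩, -⟩) <;> exact absurd hh' (not_lt.2 hh)
            rw [hempty]
            simp
      _ ≤ ∫⁻ h : ℝ, ∫⁻ q, I (t, h) q ∂γ' := by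
          apply lintegral_mono
          intro h
          by_cases hh : h ∈ Ioi (0 : ℝ)
          · rw [indicator_of_mem hh]
          · rw [indicator_of_notMem hh]
            exact zero_le
  have hJm : Measurable fun p : ℝ × ℝ => ∫⁻ q, I p q ∂γ' := hIm.lintegral_prod_right
  have hdrkm : Measurable fun q : (ℝ × ℝ) × (ℝ × ℝ) => ENNReal.ofReal (drk q.1 q.2) := by
    apply ENNReal.measurable_ofReal.comp
    unfold drk
    fun_prop
  have hae : ∀ᵐ q ∂γ', q ∈ E := by
    rw [ae_iff]
    exact hγ'Ec
  calc ∫⁻ t : ℝ, ∫⁻ a in Set.Ioi (0 : ℝ),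
        ENNReal.ofReal |landscape μ a t - landscape ν a t|
      ≤ ∫⁻ t : ℝ, ∫⁻ h : ℝ, ∫⁻ q, I (t, h) q ∂γ' := lintegral_mono key_t
    _ = ∫⁻ p : ℝ × ℝ, ∫⁻ q, I p q ∂γ' := by
        rw [Measure.volume_eq_prod, lintegral_prod _ hJm.aemeasurable]
    _ = ∫⁻ q, ∫⁻ p : ℝ × ℝ, I p q ∂(volume : Measure (ℝ × ℝ)) ∂γ' := lintegral_lintegral_swap hIm.aemeasurable
    _ ≤ ∫⁻ q, 2⁻¹ * ENNReal.ofReal (drk q.1 q.2) ∂γ' := by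
        apply lintegral_mono_ae
        filter_upwards [hae] with q hq
        have hcongr : ∀ p : ℝ × ℝ,
            I p q = ((fun p : ℝ × ℝ => (p, q)) ⁻¹' WSet).indicator 1 p := by
          intro p
          simp [hI, Set.indicator_apply, Set.mem_preimage]
        rw [lintegral_congr hcongr,
          lintegral_indicator_one (WSet_measurableSet.preimage measurable_prodMk_right)]
        have hpre : ((fun p : ℝ × ℝ => (p, q)) ⁻¹' WSet) =
            (tri q.1.1 q.1.2 \ tri q.2.1 q.2.2) ∪ (tri q.2.1 q.2.2 \ tri q.1.1 q.1.2) := rfl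
        rw [hpre]
        exact symm_diff_tri_vol hq.1.1 hq.1.2
    _ = 2⁻¹ * ∫⁻ q, ENNReal.ofReal (drk q.1 q.2) ∂γ' := lintegral_const_mul _ hdrkm
    _ ≤ 2⁻¹ * ∫⁻ q, ENNReal.ofReal (drk q.1 q.2) ∂γ := by
        rw [hγ']
        exact mul_le_mul_of_nonneg_left (setLIntegral_le_lintegral _ _) zero_le
    _ = (1 / 2 : ℝ≥0∞) * ∫⁻ q, ENNReal.ofReal (drk q.1 q.2) ∂γ := by rw [one_div]
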